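/- Let X be a first countable Hausdorff space admitting a non-trivial convergent sequence (a sequence converging to ℓ with all terms distinct from ℓ), and let φ be a lower semicontinuous submeasure with φ(ℕ) < ∞. Suppose there exists a partition {A_n : n ∈ ℕ} of ℕ with ‖A_n‖_φ > 0 for all n and lim_n ‖⋃_{k>n} A_k‖_φ = 0. Then there exists a sequence x in X whose set of I_φ-limit points is not closed. -/

import Mathlib

open Filter Topology Set
open scoped ENNReal

/-- An ideal on ℕ: contains all finite sets, closed under subsets and finite
unions, and proper. -/
def IsIdeal (I : Set (Set ℕ)) : Prop :=
  (∀ A : Set ℕ, A.Finite → A ∈ I) ∧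
  (∀ A B : Set ℕ, A ⊆ B → B ∈ I → A ∈ I) ∧
  (∀ A B : Set ℕ, A ∈ I → B ∈ I → A ∪ B ∈ I) ∧
  (Set.univ : Set ℕ) ∉ I

/-- `ℓ` is an `I`-limit point of `x`: some subsequence indexed by a set not in
`I` converges to `ℓ`. -/
def ILimitPoint {X : Type*} [TopologicalSpace X] (I : Set (Set ℕ)) (x : ℕ → X) (ℓ : X) : Prop :=
  ∃ A : Set ℕ, A ∉ I ∧ Tendsto x (atTop ⊓ 𝓟 A) (𝓝 ℓ)

/-- `ℓ` is an `I`-cluster point of `x`. -/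
def IClusterPoint {X : Type*} [TopologicalSpace X] (I : Set (Set ℕ)) (x : ℕ → X) (ℓ : X) : Prop :=
  ∀ U ∈ 𝓝 ℓ, {n | x n ∈ U} ∉ I

/-- A lower semicontinuous submeasure on ℕ. -/
def IsLSCSubmeasure (φ : Set ℕ → ℝ≥0∞) : Prop :=
  φ ∅ = 0 ∧ (∀ A B : Set ℕ, A ⊆ B → φ A ≤ φ B) ∧
  (∀ A B : Set ℕ, φ (A ∪ B) ≤ φ A + φ B) ∧
  (∀ A : Set ℕ, Tendsto (fun n => φ (A ∩ Set.Iio n)) atTop (𝓝 (φ A)))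

/-- `‖A‖_φ = lim_n φ(A \ {0,…,n-1})`, the limit of an antitone sequence,
realized as an infimum. -/
noncomputable def phiNorm (φ : Set ℕ → ℝ≥0∞) (A : Set ℕ) : ℝ≥0∞ :=
  ⨅ n : ℕ, φ (A \ Set.Iio n)

/-- The ideal of sets of asymptotic density zero. -/
def I0 : Set (Set ℕ) :=
  {S : Set ℕ | Tendsto (fun n => (Nat.card ↥(S ∩ Set.Iio n) : ℝ) / n) atTop (𝓝 0)}

/-- `u(ℓ) := lim_k ‖{n : x n ∈ U_k}‖_φ` along a decreasing local base at `ℓ`;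
its value is independent of the base and equals the infimum over all
neighborhoods. -/
noncomputable def uFun {X : Type*} [TopologicalSpace X] (φ : Set ℕ → ℝ≥0∞)
    (x : ℕ → X) (ℓ : X) : ℝ≥0∞ :=
  ⨅ U ∈ 𝓝 ℓ, phiNorm φ {n | x n ∈ U}

/-- Isolated points of a set. -/
def isolatedPts {X : Type*} [TopologicalSpace X] (B : Set X) : Set X :=
  {b ∈ B | ∃ U ∈ 𝓝 b, U ∩ B = {b}}


lemma phiNorm_mono {φ : Set ℕ → ℝ≥0∞} (hφ : IsLSCSubmeasure φ) {A B : Set ℕ}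
    (h : A ⊆ B) : phiNorm φ A ≤ phiNorm φ B :=
  iInf_mono fun n => hφ.2.1 _ _ (diff_subset_diff_left h)

lemma phiNorm_finite {φ : Set ℕ → ℝ≥0∞} (hφ : IsLSCSubmeasure φ) {A : Set ℕ}
    (h : A.Finite) : phiNorm φ A = 0 := by
  obtain ⟨N, hN⟩ := h.bddAbove
  have hAe : A \ Set.Iio (N + 1) = ∅ := by
    ext m
    simp only [mem_diff, mem_Iio, mem_empty_iff_false, iff_false, not_and, not_not]
    exact fun hm => Nat.lt_succ_of_le (hN hm)
  refine le_antisymm ?_ zero_le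
  calc phiNorm φ A ≤ φ (A \ Set.Iio (N+1)) := iInf_le _ _
    _ = 0 := by rw [hAe, hφ.1]

lemma phiNorm_split {φ : Set ℕ → ℝ≥0∞} (hφ : IsLSCSubmeasure φ) (A B : Set ℕ) :
    phiNorm φ A ≤ phiNorm φ (A ∩ B) + phiNorm φ (A \ B) := by
  unfold phiNorm
  rw [ENNReal.iInf_add]
  refine le_iInf fun n => ?_
  rw [ENNReal.add_iInf]
  refine le_iInf fun m => ?_
  calc (⨅ k, φ (A \ Set.Iio k)) ≤ φ (A \ Set.Iio (max n m)) := iInf_le _ _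
    _ ≤ φ (((A ∩ B) \ Set.Iio n) ∪ ((A \ B) \ Set.Iio m)) := by
        refine hφ.2.1 _ _ ?_
        rintro a ⟨haA, ha⟩
        simp only [mem_Iio, not_lt] at ha
        by_cases hb : a ∈ B
        · exact Or.inl ⟨⟨haA, hb⟩, by simp only [mem_Iio, not_lt]; omega⟩
        · exact Or.inr ⟨⟨haA, hb⟩, by simp only [mem_Iio, not_lt]; omega⟩
    _ ≤ _ := hφ.2.2.1 _ _

lemma infinite_neBot {S : Set ℕ} (h : S.Infinite) : (atTop ⊓ 𝓟 S).NeBot := by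
  rw [inf_principal_neBot_iff]
  intro U hU
  obtain ⟨n, hn⟩ := mem_atTop_sets.mp hU
  by_contra hne
  rw [Set.not_nonempty_iff_eq_empty] at hne
  refine h (Set.Finite.subset (Set.finite_Iio n) fun m hm => ?_)
  by_contra hlt
  simp only [mem_Iio, not_lt] at hlt
  have : m ∈ U ∩ S := ⟨hn m hlt, hm⟩
  rw [hne] at this
  exact this

/-- given a non-trivial convergent sequence in `X` and a partition
as in Statement 9, some sequence has a non-closed set of `I_φ`-limit points. -/
theorem stmt10 {X : Type*} [TopologicalSpace X] [FirstCountableTopology X]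
    [T2Space X] (hconv : ∃ (y : ℕ → X) (ℓ : X), Tendsto y atTop (𝓝 ℓ) ∧ ∀ n, y n ≠ ℓ)
    (φ : Set ℕ → ℝ≥0∞) (hφ : IsLSCSubmeasure φ) (hfin : φ Set.univ < ⊤)
    (P : ℕ → Set ℕ) (hdisj : Pairwise (Function.onFun Disjoint P))
    (hcover : (⋃ n, P n) = Set.univ) (hpos : ∀ n, 0 < phiNorm φ (P n))
    (hlim : Tendsto (fun n => phiNorm φ (⋃ k > n, P k)) atTop (𝓝 0)) :
    ∃ x : ℕ → X, ¬ IsClosed {ℓ : X | ILimitPoint {A : Set ℕ | phiNorm φ A = 0} x ℓ} := by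
  classical
  obtain ⟨y, ℓ, hy, hne⟩ := hconv
  have hmem : ∀ m : ℕ, ∃ n, m ∈ P n := fun m =>
    mem_iUnion.mp (hcover ▸ mem_univ m)
  set x : ℕ → X := fun m => y (hmem m).choose with hxdef
  have hx : ∀ {m n : ℕ}, m ∈ P n → x m = y n := by
    intro m n hm
    have hc := (hmem m).choose_spec
    rcases eq_or_ne (hmem m).choose n with h | h
    · simp only [hxdef, h]
    · exact absurd hm (Set.disjoint_left.mp (hdisj h) hc)
  set I : Set (Set ℕ) := {A : Set ℕ | phiNorm φ A = 0} with hI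
  refine ⟨x, fun hS => ?_⟩
  have hyS : ∀ n, ILimitPoint I x (y n) := by
    intro n
    refine ⟨P n, (hpos n).ne', ?_⟩
    refine Tendsto.congr' ?_ tendsto_const_nhds
    filter_upwards [mem_inf_of_right (mem_principal_self (P n))] with m hm
    exact (hx hm).symm
  have hℓS : ILimitPoint I x ℓ := hS.mem_of_tendsto hy (Eventually.of_forall hyS)
  obtain ⟨A, hAI, hAt⟩ := hℓS
  have hApos : 0 < phiNorm φ A := pos_iff_ne_zero.mpr hAI
  obtain ⟨N, hN⟩ := (hlim.eventually_lt_const hApos).exists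
  set B : Set ℕ := ⋃ k ∈ Set.Iic N, P k with hB
  have hdiff : A \ B ⊆ ⋃ k > N, P k := by
    rintro m ⟨hmA, hmB⟩
    obtain ⟨k, hk⟩ := hmem m
    rcases le_or_gt k N with h | h
    · exact absurd (Set.mem_biUnion (show k ∈ Set.Iic N from h) hk) hmB
    · exact mem_biUnion h hk
  have hpos2 : 0 < phiNorm φ (A ∩ B) := by
    by_contra hc
    push_neg at hc
    have h0 : phiNorm φ (A ∩ B) = 0 := le_antisymm hc zero_le
    have hle : phiNorm φ A ≤ phiNorm φ (⋃ k > N, P k) := by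
      calc phiNorm φ A ≤ phiNorm φ (A ∩ B) + phiNorm φ (A \ B) := phiNorm_split hφ A B
        _ = phiNorm φ (A \ B) := by rw [h0, zero_add]
        _ ≤ _ := phiNorm_mono hφ hdiff
    exact absurd (lt_of_le_of_lt hle hN) (lt_irrefl _)
  have hInf : ∃ k ≤ N, (A ∩ P k).Infinite := by
    by_contra hc
    push_neg at hc
    have hfin2 : (A ∩ B).Finite := by
      have hEq : A ∩ B = ⋃ k ∈ Set.Iic N, (A ∩ P k) := by
        rw [hB, Set.inter_iUnion₂]
      rw [hEq]
      exact Set.Finite.biUnion (Set.finite_Iic N) fun k hk =>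
        hc k hk
    exact absurd (phiNorm_finite hφ hfin2) hpos2.ne'
  obtain ⟨k, hkN, hkInf⟩ := hInf
  have hnb : (atTop ⊓ 𝓟 (A ∩ P k)).NeBot := infinite_neBot hkInf
  have h1 : Tendsto x (atTop ⊓ 𝓟 (A ∩ P k)) (𝓝 ℓ) :=
    hAt.mono_left (inf_le_inf_left _ (principal_mono.mpr inter_subset_left))
  have h2 : Tendsto x (atTop ⊓ 𝓟 (A ∩ P k)) (𝓝 (y k)) := by
    refine Tendsto.congr' ?_ tendsto_const_nhds
    filter_upwards [mem_inf_of_right (mem_principal_self _)] with m hm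
    exact (hx hm.2).symm
  exact hne k (tendsto_nhds_unique h2 h1)
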